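/- If ω ∈ S_n is 231-avoiding (there are no indices i < j < l with ω(l) < ω(i) < ω(j)), then any two elements m_{i,x}(ω) and m_{j,y}(ω) of M_ω with i ≠ j are incomparable; hence M_ω is a disjoint union of the chains C_i(ω) = {m_{i,x}(ω) : x ∈ [c_i(ω)]}. -/
import Mathlib


open Finset

/-- `c_i(ω)`: the number of `j > i` with `ω i > ω j` (the Lehmer code entries). -/
def lehmer {n : ℕ} (ω : Equiv.Perm (Fin n)) (i : Fin n) : ℕ :=
  (univ.filter fun j => i < j ∧ ω j < ω i).card

/-- `c_{i,j}(ω)`: the number of `k` with `i < k < j` and `ω i > ω k`. -/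
def cij {n : ℕ} (ω : Equiv.Perm (Fin n)) (i j : Fin n) : ℕ :=
  (univ.filter fun k => i < k ∧ k < j ∧ ω k < ω i).card

/-- `m_{i,x}(ω) ∈ ℕ^n`, defined coordinatewise. -/
def mvec {n : ℕ} (ω : Equiv.Perm (Fin n)) (i : Fin n) (x : ℕ) : Fin n → ℕ :=
  fun j => if j < i then 0 else if j = i then x
    else if ω j < ω i then 0 else x - cij ω i j

lemma key {n : ℕ} (ω : Equiv.Perm (Fin n))
    (havoid : ∀ i j l : Fin n, i < j → j < l → ¬ (ω l < ω i ∧ ω i < ω j))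
    (i j : Fin n) (x y : ℕ) (hij : i < j) (hx : 1 ≤ x) (hxc : x ≤ lehmer ω i)
    (hy : 1 ≤ y) :
    ¬ mvec ω i x ≤ mvec ω j y ∧ ¬ mvec ω j y ≤ mvec ω i x := by
  have hne : j ≠ i := hij.ne'
  have hnlt : ¬ j < i := not_lt.mpr hij.le
  constructor
  · intro h
    have := h i
    simp [mvec, hij, hij.ne, lt_irrefl] at this
    omega
  · intro h
    have := h j
    by_cases hω : ω j < ω i
    · simp [mvec, hnlt, hne, hω, lt_irrefl] at this
      omega
    · have hωlt : ω i < ω j :=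
        lt_of_le_of_ne (not_lt.mp hω) (ω.injective.ne hij.ne)
      have hsub : lehmer ω i ≤ cij ω i j := by
        apply Finset.card_le_card
        intro k hk
        simp only [lehmer, cij, Finset.mem_filter, Finset.mem_univ, true_and] at hk ⊢
        obtain ⟨hik, hωk⟩ := hk
        refine ⟨hik, ?_, hωk⟩
        by_contra hjk
        push_neg at hjk
        rcases lt_or_eq_of_le hjk with h1 | h1
        · exact havoid i j k hij h1 ⟨hωk, hωlt⟩
        · exact hω (h1 ▸ hωk)
      simp [mvec, hnlt, hne, hω, lt_irrefl] at this
      omega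

theorem stmt6 (n : ℕ) (ω : Equiv.Perm (Fin n))
    (havoid : ∀ i j l : Fin n, i < j → j < l → ¬ (ω l < ω i ∧ ω i < ω j)) :
    ∀ i j : Fin n, ∀ x y : ℕ, i ≠ j →
      1 ≤ x → x ≤ lehmer ω i → 1 ≤ y → y ≤ lehmer ω j →
      ¬ mvec ω i x ≤ mvec ω j y ∧ ¬ mvec ω j y ≤ mvec ω i x := by
  intro i j x y hij hx hxc hy hyc
  rcases lt_or_gt_of_ne hij with h | h
  · exact key ω havoid i j x y h hx hxc hy
  · exact (key ω havoid j i y x h hy hyc hx).symm
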